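/- Let γ_{ij} = ∑_{q=max(0, i+j+1-s)}^{min(i,j)} (-1)^{min(i,j)+1-q} α_{q, i+j+1-q} with α_{ij} = 1/(i! j!). Then for all nonnegative integers i, j with i + j ≤ s - 1, one has γ_{ij} = -1/(i! j! (i+j+1)). -/

import Mathlib

lemma alt_partial_sum (n m : ℕ) (h : m ≤ n) :
    ∑ q ∈ Finset.range (m + 1), (-1 : ℝ) ^ q * ((n + 1).choose q : ℝ)
      = (-1) ^ m * (n.choose m : ℝ) := by
  induction m with
  | zero => simp
  | succ k ih =>
    have hk : k ≤ n := Nat.le_of_succ_le h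
    rw [Finset.sum_range_succ, ih hk]
    have hpascal : (n + 1).choose (k + 1) = n.choose k + n.choose (k + 1) :=
      Nat.succ_sub_one (n := n) ▸ Nat.choose_succ_succ n k
    push_cast [hpascal]
    ring

theorem gamma_coefficients (s : ℕ) (hs : 1 ≤ s) (i j : ℕ) (hij : i + j ≤ s - 1) :
    (∑ q ∈ Finset.Icc (i + j + 1 - s) (min i j),
        ((-1 : ℝ) ^ ((min i j : ℤ) + 1 - (q : ℤ))) /
          ((Nat.factorial q : ℝ) * (Nat.factorial (i + j + 1 - q) : ℝ)))
    = -1 / ((Nat.factorial i : ℝ) * (Nat.factorial j : ℝ) * ((i : ℝ) + (j : ℝ) + 1)) := by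
  set n := i + j with hn
  set m := min i j with hm
  have hmn : m ≤ n := le_trans (min_le_left i j) (Nat.le_add_right i j)
  have h0 : n + 1 - s = 0 := by omega
  rw [h0, show Finset.Icc 0 m = Finset.range (m + 1) by
    ext x; simp [Nat.lt_succ_iff]]
  have hmz : (i : ℤ) ⊓ (j : ℤ) = (m : ℤ) := by
    rw [hm]; exact (Nat.cast_min i j).symm
  simp only [hmz]
  have hterm : ∀ q ∈ Finset.range (m + 1),
      ((-1 : ℝ) ^ ((m : ℤ) + 1 - (q : ℤ))) /
          ((Nat.factorial q : ℝ) * (Nat.factorial (n + 1 - q) : ℝ))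
        = (-1) ^ (m + 1) / ((n + 1).factorial : ℝ)
            * ((-1 : ℝ) ^ q * ((n + 1).choose q : ℝ)) := by
    intro q hq
    have hq' : q ≤ m := Nat.lt_succ_iff.mp (Finset.mem_range.mp hq)
    have hcast : (m : ℤ) + 1 - (q : ℤ) = ((m + 1 - q : ℕ) : ℤ) := by omega
    rw [hcast, zpow_natCast]
    have hpow : (-1 : ℝ) ^ (m + 1 - q) = (-1) ^ (m + 1) * (-1) ^ q := by
      rw [← pow_add, show m + 1 + q = m + 1 - q + 2 * q by omega, pow_add, pow_mul]
      norm_num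
    rw [hpow]
    have hfac : (Nat.factorial q : ℝ) * (Nat.factorial (n + 1 - q) : ℝ)
        * ((n + 1).choose q : ℝ) = ((n + 1).factorial : ℝ) := by
      have := Nat.choose_mul_factorial_mul_factorial (n := n + 1) (k := q) (by omega)
      push_cast [← this]; ring
    have h1 : (Nat.factorial q : ℝ) ≠ 0 := Nat.cast_ne_zero.mpr q.factorial_ne_zero
    have h2 : (Nat.factorial (n + 1 - q) : ℝ) ≠ 0 :=
      Nat.cast_ne_zero.mpr (n + 1 - q).factorial_ne_zero
    have h3 : ((n + 1).factorial : ℝ) ≠ 0 := Nat.cast_ne_zero.mpr (n + 1).factorial_ne_zero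
    field_simp
    linear_combination (-1 : ℝ) * hfac
  rw [Finset.sum_congr rfl hterm, ← Finset.mul_sum, alt_partial_sum n m hmn]
  have hCn : (n.choose m : ℝ) * ((Nat.factorial i : ℝ) * (Nat.factorial j : ℝ))
      * ((n : ℝ) + 1) = ((n + 1).factorial : ℝ) := by
    have hij' : Nat.factorial i * Nat.factorial j
        = Nat.factorial m * Nat.factorial (n - m) := by
      rcases le_total i j with h | h
      · rw [hm, min_eq_left h, hn, show i + j - i = j by omega]
      · rw [hm, min_eq_right h, hn, show i + j - j = i by omega, Nat.mul_comm]
    have hch := Nat.choose_mul_factorial_mul_factorial hmn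
    have : n.choose m * (Nat.factorial i * Nat.factorial j) * (n + 1)
        = (n + 1).factorial := by
      rw [hij', ← Nat.mul_assoc, hch, Nat.factorial_succ, Nat.mul_comm]
    push_cast [← this]; ring
  have h3 : ((n + 1).factorial : ℝ) ≠ 0 := Nat.cast_ne_zero.mpr (n + 1).factorial_ne_zero
  have hi : (Nat.factorial i : ℝ) ≠ 0 := Nat.cast_ne_zero.mpr i.factorial_ne_zero
  have hj : (Nat.factorial j : ℝ) ≠ 0 := Nat.cast_ne_zero.mpr j.factorial_ne_zero
  have hn1 : ((i : ℝ) + (j : ℝ) + 1) ≠ 0 := by positivity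
  have hnc : ((n : ℝ) + 1) = (i : ℝ) + (j : ℝ) + 1 := by push_cast [hn]; ring
  rw [div_mul_eq_mul_div, div_eq_div_iff h3 (by positivity)]
  rw [← hnc]
  have : (-1 : ℝ) ^ (m + 1) * ((-1) ^ m * (n.choose m : ℝ)) = -(n.choose m : ℝ) := by
    rw [← mul_assoc, ← pow_add, show m + 1 + m = 2 * m + 1 by ring, pow_succ, pow_mul]
    norm_num
  rw [this]
  linear_combination (-1 : ℝ) * hCn
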